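/- When two users in flat channels split the band [0,W] into disjoint pieces of sizes yW and (1−y)W and each spreads its maximum power uniformly over its piece, the total capacity C(y) = yW·log(1 + P_1 h_{11}/(y W N_1)) + (1−y)W·log(1 + P_2 h_{22}/((1−y) W N_2)) satisfies, for every y ∈ (0,1), C(y) ≤ W·log(1 + P_1 h_{11}/(W N_1) + P_2 h_{22}/(W N_2)), with equality if and only if y = N_2 P_1 h_{11} / (N_1 P_2 h_{22} + N_2 P_1 h_{11}); i.e., the maximum is achieved exactly when the spectrum is divided in the ratio N_2 P_1 h_{11} : N_1 P_2 h_{22}. -/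

import Mathlib

open Real

lemma jensen_key (a b y : ℝ) (ha : 0 < a) (hb : 0 < b) (hy0 : 0 < y) (hy1 : y < 1) :
    y * Real.log (1 + a / y) + (1 - y) * Real.log (1 + b / (1 - y)) ≤
      Real.log (1 + a + b) ∧
    (y * Real.log (1 + a / y) + (1 - y) * Real.log (1 + b / (1 - y)) =
      Real.log (1 + a + b) ↔ y = a / (a + b)) := by
  have hy1' : 0 < 1 - y := by linarith
  set u : ℝ := 1 + a / y with hu
  set v : ℝ := 1 + b / (1 - y) with hv
  have hu0 : 0 < u := by positivity
  have hv0 : 0 < v := by positivity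
  have hsum : y * u + (1 - y) * v = 1 + a + b := by
    rw [hu, hv]
    field_simp
    ring
  have heq_iff : u = v ↔ y = a / (a + b) := by
    rw [hu, hv]
    rw [add_right_inj, div_eq_div_iff hy0.ne' hy1'.ne', eq_div_iff (by positivity)]
    constructor <;> intro h <;> nlinarith
  by_cases huv : u = v
  · have hyv : y = a / (a + b) := heq_iff.mp huv
    have : y * Real.log u + (1 - y) * Real.log v = Real.log (1 + a + b) := by
      rw [← huv] at hsum ⊢
      have : y * u + (1 - y) * u = u := by ring
      rw [this] at hsum
      rw [hsum]; ring
    exact ⟨le_of_eq this, by constructor <;> intro _ <;> [exact hyv; exact this]⟩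
  · have hstrict := strictConcaveOn_log_Ioi.2 (Set.mem_Ioi.mpr hu0)
      (Set.mem_Ioi.mpr hv0) huv hy0 hy1' (by ring)
    simp only [smul_eq_mul] at hstrict
    rw [hsum] at hstrict
    refine ⟨le_of_lt hstrict, ?_⟩
    constructor
    · intro h; exact absurd h (ne_of_lt hstrict)
    · intro h; exact absurd (heq_iff.mpr h) huv

theorem disjoint_split_optimal_ratio
    (W P1 P2 h11 h22 N1 N2 : ℝ)
    (hW : 0 < W) (hP1 : 0 < P1) (hP2 : 0 < P2)
    (hh11 : 0 < h11) (hh22 : 0 < h22)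
    (hN1 : 0 < N1) (hN2 : 0 < N2)
    (y : ℝ) (hy : y ∈ Set.Ioo (0:ℝ) 1) :
    y * W * Real.log (1 + P1 * h11 / (y * W * N1)) +
      (1 - y) * W * Real.log (1 + P2 * h22 / ((1 - y) * W * N2)) ≤
        W * Real.log (1 + P1 * h11 / (W * N1) + P2 * h22 / (W * N2)) ∧
    (y * W * Real.log (1 + P1 * h11 / (y * W * N1)) +
      (1 - y) * W * Real.log (1 + P2 * h22 / ((1 - y) * W * N2)) =
        W * Real.log (1 + P1 * h11 / (W * N1) + P2 * h22 / (W * N2)) ↔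
      y = N2 * P1 * h11 / (N1 * P2 * h22 + N2 * P1 * h11)) := by
  obtain ⟨hy0, hy1⟩ := hy
  set a : ℝ := P1 * h11 / (W * N1) with ha'
  set b : ℝ := P2 * h22 / (W * N2) with hb'
  have ha : 0 < a := by positivity
  have hb : 0 < b := by positivity
  have e1 : P1 * h11 / (y * W * N1) = a / y := by
    rw [ha']; field_simp
  have e2 : P2 * h22 / ((1 - y) * W * N2) = b / (1 - y) := by
    rw [hb']
    have : (0:ℝ) < 1 - y := by linarith
    field_simp
  have e3 : a / (a + b) = N2 * P1 * h11 / (N1 * P2 * h22 + N2 * P1 * h11) := by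
    rw [ha', hb']
    rw [div_eq_div_iff (by positivity) (by positivity)]
    field_simp
    ring
  obtain ⟨hle, hiff⟩ := jensen_key a b y ha hb hy0 hy1
  rw [e1, e2, ← e3]
  constructor
  · calc y * W * Real.log (1 + a / y) + (1 - y) * W * Real.log (1 + b / (1 - y))
        = W * (y * Real.log (1 + a / y) + (1 - y) * Real.log (1 + b / (1 - y))) := by ring
      _ ≤ W * Real.log (1 + a + b) := by
          exact mul_le_mul_of_nonneg_left hle hW.le
  · rw [show y * W * Real.log (1 + a / y) + (1 - y) * W * Real.log (1 + b / (1 - y))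
        = W * (y * Real.log (1 + a / y) + (1 - y) * Real.log (1 + b / (1 - y))) by ring]
    rw [mul_right_inj' hW.ne']
    exact hiff
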